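/- In PGL(2,ℂ) = Matrix.ProjectiveGeneralLinearGroup (Fin 2) ℂ, let r, s, t be the images of the invertible matrices !![ζ, 0; 0, 1], !![0, 1; 1, 0], !![−1, 0; 0, 1] respectively, where ζ ∈ ℂ is a primitive 5th root of unity. Then the subgroup generated by r and s has order 10 (it is a dihedral group D₁₀ acting on ℙ¹), the subgroup generated by r, s, t has order 20 (a dihedral group D₂₀), and the normalizer in PGL(2,ℂ) of Subgroup.closure {r, s} is exactly Subgroup.closure {r, s, t}. -/

import Mathlib

/-- The projective general linear group `PGL(n, R)`, i.e. `GL(n, R)` modulo its center. -/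
abbrev ProjectiveGeneralLinearGroup (n : Type*) [DecidableEq n] [Fintype n]
    (K : Type*) [CommRing K] : Type _ :=
  GL n K ⧸ Subgroup.center (GL n K)


open Matrix DihedralGroup Subgroup

set_option linter.unusedSectionVars false

noncomputable section

/-! ### generic helpers -/

lemma smul_fin_two (c p q u v : ℂ) : c • !![p, q; u, v] = !![c*p, c*q; c*u, c*v] := by
  ext i j; fin_cases i <;> fin_cases j <;> simp

lemma fin_two_eq {p q u v p' q' u' v' : ℂ} (h : !![p,q;u,v] = !![p',q';u',v']) :
    p = p' ∧ q = q' ∧ u = u' ∧ v = v' := by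
  refine ⟨?_, ?_, ?_, ?_⟩
  · simpa using congrFun (congrFun h 0) 0
  · simpa using congrFun (congrFun h 0) 1
  · simpa using congrFun (congrFun h 1) 0
  · simpa using congrFun (congrFun h 1) 1

def scalarGL (c : ℂˣ) : GL (Fin 2) ℂ :=
  ⟨(c : ℂ) • 1, ((c⁻¹ : ℂˣ) : ℂ) • 1, by simp [smul_smul], by simp [smul_smul]⟩

lemma scalarGL_mem_center (c : ℂˣ) : scalarGL c ∈ Subgroup.center (GL (Fin 2) ℂ) := by
  rw [Subgroup.mem_center_iff]
  intro g
  ext : 1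
  show (g : Matrix (Fin 2) (Fin 2) ℂ) * ((c:ℂ) • 1) = ((c:ℂ) • 1) * g
  simp [mul_smul_comm, smul_mul_assoc]

lemma mk_eq_mk_iff (A B : GL (Fin 2) ℂ) :
    (QuotientGroup.mk A : ProjectiveGeneralLinearGroup (Fin 2) ℂ) = QuotientGroup.mk B ↔
      ∃ c : ℂˣ, (B : Matrix (Fin 2) (Fin 2) ℂ) = (c : ℂ) • (A : Matrix (Fin 2) (Fin 2) ℂ) := by
  rw [QuotientGroup.eq]
  constructor
  · intro h
    rw [Subgroup.mem_center_iff] at h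
    have hcomm : ∀ t : TransvectionStruct (Fin 2) ℂ,
        Commute t.toMatrix ((A⁻¹ * B : GL (Fin 2) ℂ) : Matrix (Fin 2) (Fin 2) ℂ) := by
      intro t
      have htu : IsUnit (t.toMatrix.det) := by
        rw [TransvectionStruct.det]; exact isUnit_one
      have h2 := congrArg Units.val (h (Matrix.GeneralLinearGroup.mk'' t.toMatrix htu))
      show t.toMatrix * _ = _ * t.toMatrix
      simpa [Matrix.GeneralLinearGroup.mk'', Matrix.nonsingInvUnit] using h2
    obtain ⟨c, hc⟩ := Matrix.mem_range_scalar_of_commute_transvectionStruct hcomm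
    have hdet : IsUnit ((A⁻¹ * B : GL (Fin 2) ℂ) : Matrix (Fin 2) (Fin 2) ℂ).det :=
      (Matrix.isUnit_iff_isUnit_det _).1 ⟨A⁻¹ * B, rfl⟩
    have hcu : c ≠ 0 := by
      intro h0
      rw [← hc, h0] at hdet
      simp [Matrix.scalar_apply, Matrix.diagonal_zero] at hdet
    refine ⟨Units.mk0 c hcu, ?_⟩
    have hB : (B : Matrix (Fin 2) (Fin 2) ℂ) =
        (A : Matrix (Fin 2) (Fin 2) ℂ) * ((A⁻¹ * B : GL (Fin 2) ℂ) : Matrix (Fin 2) (Fin 2) ℂ) := by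
      rw [← Units.val_mul, ← mul_assoc, mul_inv_cancel, one_mul]
    rw [hB, ← hc, Matrix.scalar_apply, ← Matrix.smul_one_eq_diagonal]
    simp [mul_smul_comm]
  · rintro ⟨c, hc⟩
    have : A⁻¹ * B = scalarGL c := by
      ext : 1
      show ((A⁻¹ : GL (Fin 2) ℂ) : Matrix (Fin 2) (Fin 2) ℂ) * B = (c:ℂ) • 1
      rw [hc, Matrix.coe_units_inv, mul_smul_comm, Matrix.nonsing_inv_mul]
      exact ((Matrix.isUnit_iff_isUnit_det _).1 ⟨A, rfl⟩)
    rw [this]; exact scalarGL_mem_center c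

/-! ### dihedral hom -/

section Dih
variable {G : Type*} [Group G] {n : ℕ} [NeZero n] (ρ σ : G) (hρ : ρ ^ n = 1) (hσ : σ * σ = 1)
  (hrel : σ * ρ = ρ⁻¹ * σ)

include hρ in
lemma pow_val_mod (a : ℕ) : ρ ^ (a % n) = ρ ^ a := by
  conv_rhs => rw [← Nat.div_add_mod a n]
  rw [pow_add, pow_mul, hρ, one_pow, one_mul]

include hρ in
lemma pow_val_add (i j : ZMod n) : ρ ^ ((i + j).val) = ρ ^ i.val * ρ ^ j.val := by
  rw [ZMod.val_add, pow_val_mod ρ hρ, pow_add]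

include hρ in
lemma pow_val_sub (i j : ZMod n) : ρ ^ ((j - i).val) = (ρ ^ i.val)⁻¹ * ρ ^ j.val := by
  have h := pow_val_add ρ hρ i (j - i)
  rw [add_sub_cancel] at h
  rw [eq_inv_mul_iff_mul_eq]
  exact h.symm

include hrel in
lemma sigma_pow (k : ℕ) : σ * ρ ^ k = (ρ ^ k)⁻¹ * σ := by
  induction k with
  | zero => simp
  | succ m ih =>
      rw [pow_succ, ← mul_assoc, ih, mul_assoc, hrel, ← mul_assoc, ← _root_.mul_inv_rev, ← pow_succ']
      rw [pow_succ]

/-- Universal hom out of the dihedral group. -/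
def dihedralHom : DihedralGroup n →* G where
  toFun x := match x with
    | .r i => ρ ^ i.val
    | .sr i => σ * ρ ^ i.val
  map_one' := by
    show ρ ^ (0 : ZMod n).val = 1
    simp [ZMod.val_zero]
  map_mul' := by
    rintro (i | i) (j | j)
    · exact pow_val_add ρ hρ i j
    · show σ * ρ ^ ((j - i).val) = ρ ^ i.val * (σ * ρ ^ j.val)
      have h2 : ρ ^ i.val * σ = σ * (ρ ^ i.val)⁻¹ := by
        have h := sigma_pow ρ σ hrel i.val
        rw [eq_mul_inv_iff_mul_eq, mul_assoc, h, ← mul_assoc, mul_inv_cancel, one_mul]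
      rw [pow_val_sub ρ hρ, ← mul_assoc, ← mul_assoc, h2]
    · show σ * ρ ^ ((i + j).val) = σ * ρ ^ i.val * ρ ^ j.val
      rw [pow_val_add ρ hρ, mul_assoc]
    · show ρ ^ ((j - i).val) = (σ * ρ ^ i.val) * (σ * ρ ^ j.val)
      rw [pow_val_sub ρ hρ, sigma_pow ρ σ hrel i.val, mul_assoc, ← mul_assoc σ σ, hσ, one_mul]

@[simp] lemma dihedralHom_r (i : ZMod n) : dihedralHom ρ σ hρ hσ hrel (.r i) = ρ ^ i.val := rfl
@[simp] lemma dihedralHom_sr (i : ZMod n) :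
    dihedralHom ρ σ hρ hσ hrel (.sr i) = σ * ρ ^ i.val := rfl

end Dih
end

lemma rel_helper {G : Type*} [Group G] {x y : G} (key : x * y * x = y) : y * x = x⁻¹ * y := by
  rw [eq_comm, inv_mul_eq_iff_eq_mul, ← mul_assoc]; exact key.symm

section Main

variable {ζ : ℂ} (hζ : IsPrimitiveRoot ζ 5) {R S T : GL (Fin 2) ℂ}
  (hR : (R : Matrix (Fin 2) (Fin 2) ℂ) = !![ζ, 0; 0, 1])
  (hS : (S : Matrix (Fin 2) (Fin 2) ℂ) = !![0, 1; 1, 0])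
  (hT : (T : Matrix (Fin 2) (Fin 2) ℂ) = !![-1, 0; 0, 1])

local notation "PGL" => ProjectiveGeneralLinearGroup (Fin 2) ℂ

include hζ in
lemma hz5 : ζ ^ 5 = 1 := hζ.pow_eq_one
include hζ in
lemma hz0 : ζ ≠ 0 := fun h => by have := hz5 hζ; rw [h] at this; norm_num at this
include hζ in
lemma hz1 : ζ ≠ 1 := hζ.ne_one (by norm_num)
include hζ in
lemma hzz1 : ζ * ζ ≠ 1 := by
  have := hζ.pow_ne_one_of_pos_of_lt (l := 2) two_ne_zero (by norm_num)
  rwa [pow_two] at this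

lemma diag_pow (U : GL (Fin 2) ℂ) (u : ℂ) (hU : (U : Matrix (Fin 2) (Fin 2) ℂ) = !![u,0;0,1])
    (k : ℕ) : ((U ^ k : GL (Fin 2) ℂ) : Matrix (Fin 2) (Fin 2) ℂ) = !![u ^ k, 0; 0, 1] := by
  induction k with
  | zero => simp [Matrix.one_fin_two]
  | succ m ih =>
      rw [pow_succ, Units.val_mul, ih, hU, Matrix.mul_fin_two]
      norm_num [pow_succ]

include hζ hR in
lemma GLR5 : R ^ 5 = 1 := by
  ext : 1
  rw [diag_pow R ζ hR 5, hz5 hζ, Units.val_one, Matrix.one_fin_two]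

include hS in
lemma GLS2 : S * S = 1 := by
  ext : 1
  rw [Units.val_mul, hS, Units.val_one, Matrix.mul_fin_two, Matrix.one_fin_two]
  norm_num

include hT in
lemma GLT2 : T * T = 1 := by
  ext : 1
  rw [Units.val_mul, hT, Units.val_one, Matrix.mul_fin_two, Matrix.one_fin_two]
  norm_num

include hR hT in
lemma GLTR : ((T * R : GL (Fin 2) ℂ) : Matrix (Fin 2) (Fin 2) ℂ) = !![-ζ, 0; 0, 1] := by
  rw [Units.val_mul, hT, hR, Matrix.mul_fin_two]
  norm_num

include hζ hR hT in
lemma GLTR10 : (T * R) ^ 10 = 1 := by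
  ext : 1
  rw [diag_pow (T*R) (-ζ) (GLTR hR hT) 10, Units.val_one, Matrix.one_fin_two]
  norm_num [show ((-ζ)^10 : ℂ) = (ζ^5)^2 by ring, hz5 hζ]

include hζ hR hS in
lemma PGLrel5 : (QuotientGroup.mk S : PGL) * QuotientGroup.mk R =
    (QuotientGroup.mk R : PGL)⁻¹ * QuotientGroup.mk S := by
  have key : (QuotientGroup.mk (R * S * R) : PGL) = QuotientGroup.mk S := by
    refine (mk_eq_mk_iff _ _).2 ⟨(Units.mk0 ζ (hz0 hζ))⁻¹, ?_⟩
    simp only [Units.val_mul, hR, hS]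
    rw [Matrix.mul_fin_two, Matrix.mul_fin_two]
    norm_num [smul_fin_two, inv_mul_cancel₀ (hz0 hζ)]
  rw [QuotientGroup.mk_mul, QuotientGroup.mk_mul] at key
  exact rel_helper key

include hζ hR hS hT in
lemma PGLrel10 : (QuotientGroup.mk S : PGL) * (QuotientGroup.mk T * QuotientGroup.mk R) =
    ((QuotientGroup.mk T : PGL) * QuotientGroup.mk R)⁻¹ *
      QuotientGroup.mk S := by
  have hnz : (-ζ : ℂ) ≠ 0 := neg_ne_zero.2 (hz0 hζ)
  have key : (QuotientGroup.mk ((T * R) * S * (T * R)) : PGL) = QuotientGroup.mk S := by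
    refine (mk_eq_mk_iff _ _).2 ⟨(Units.mk0 (-ζ) hnz)⁻¹, ?_⟩
    simp only [Units.val_mul, hR, hS, hT]
    rw [Matrix.mul_fin_two, Matrix.mul_fin_two, Matrix.mul_fin_two]
    have h1 : -((-ζ)⁻¹ * ζ : ℂ) = 1 := by
      rw [show -((-ζ)⁻¹ * ζ : ℂ) = (-ζ)⁻¹ * (-ζ) by ring, inv_mul_cancel₀ hnz]
    norm_num [smul_fin_two, h1, inv_mul_cancel₀ (hz0 hζ)]
  rw [QuotientGroup.mk_mul, QuotientGroup.mk_mul, QuotientGroup.mk_mul] at key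
  exact rel_helper key

end Main
section Dih2
variable {G : Type*} [Group G] {n : ℕ} [NeZero n] (ρ σ : G) (hρ : ρ ^ n = 1) (hσ : σ * σ = 1)
  (hrel : σ * ρ = ρ⁻¹ * σ)

lemma dihedralHom_range (hn : 1 < n) :
    (dihedralHom ρ σ hρ hσ hrel).range = Subgroup.closure {ρ, σ} := by
  apply le_antisymm
  · rintro x ⟨d, rfl⟩
    have hρm : ρ ∈ Subgroup.closure {ρ, σ} := Subgroup.subset_closure (by simp)
    have hσm : σ ∈ Subgroup.closure {ρ, σ} := Subgroup.subset_closure (by simp)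
    cases d with
    | r i => exact pow_mem hρm _
    | sr i => exact mul_mem hσm (pow_mem hρm _)
  · rw [Subgroup.closure_le]
    rintro x (rfl | rfl)
    · exact ⟨.r 1, by simp [ZMod.val_one_eq_one_mod, Nat.mod_eq_of_lt hn]⟩
    · exact ⟨.sr 0, by simp [ZMod.val_zero]⟩

lemma dihedralHom_inj (h1 : ∀ i : ZMod n, ρ ^ i.val = 1 → i = 0)
    (h2 : ∀ i : ZMod n, σ * ρ ^ i.val ≠ 1) :
    Function.Injective (dihedralHom ρ σ hρ hσ hrel) := by
  rw [injective_iff_map_eq_one]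
  rintro (i | i) h
  · rw [DihedralGroup.one_def]
    exact congrArg DihedralGroup.r (h1 i h)
  · exact absurd h (h2 i)

include hρ hσ hrel in
lemma dihedral_closure_card (hn : 1 < n)
    (h1 : ∀ i : ZMod n, ρ ^ i.val = 1 → i = 0)
    (h2 : ∀ i : ZMod n, σ * ρ ^ i.val ≠ 1) :
    Nat.card (Subgroup.closure {ρ, σ}) = 2 * n ∧
      Nonempty (Subgroup.closure {ρ, σ} ≃* DihedralGroup n) := by
  have hinj := dihedralHom_inj ρ σ hρ hσ hrel h1 h2
  have e1 : DihedralGroup n ≃* (dihedralHom ρ σ hρ hσ hrel).range :=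
    MonoidHom.ofInjective hinj
  have e2 : Subgroup.closure {ρ, σ} ≃* DihedralGroup n :=
    (MulEquiv.subgroupCongr (dihedralHom_range ρ σ hρ hσ hrel hn).symm).trans e1.symm
  refine ⟨?_, ⟨e2⟩⟩
  rw [Nat.card_congr e2.toEquiv, Nat.card_eq_fintype_card, DihedralGroup.card]
end Dih2
section Main2

variable {ζ : ℂ} (hζ : IsPrimitiveRoot ζ 5) {R S T : GL (Fin 2) ℂ}
  (hR : (R : Matrix (Fin 2) (Fin 2) ℂ) = !![ζ, 0; 0, 1])
  (hS : (S : Matrix (Fin 2) (Fin 2) ℂ) = !![0, 1; 1, 0])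
  (hT : (T : Matrix (Fin 2) (Fin 2) ℂ) = !![-1, 0; 0, 1])

local notation "PGL" => ProjectiveGeneralLinearGroup (Fin 2) ℂ
local notation "mk" => (QuotientGroup.mk (s := Subgroup.center (GL (Fin 2) ℂ)))

include hζ in
lemma negζprim : IsPrimitiveRoot (-ζ) 10 := by
  constructor
  · rw [show ((-ζ)^10 : ℂ) = (ζ^5)^2 by ring, hz5 hζ]; norm_num
  · intro l hl
    have h2 : ζ ^ (2 * l) = 1 := by
      rw [show (ζ^(2*l) : ℂ) = ((-ζ)^2)^l by ring, pow_right_comm, hl, one_pow]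
    have h5 : (5 : ℕ) ∣ 2 * l := hζ.dvd_of_pow_eq_one _ h2
    have h5' : (5 : ℕ) ∣ l := (Nat.Coprime.dvd_of_dvd_mul_left (by norm_num) h5)
    have hzl : ζ ^ l = 1 := by
      obtain ⟨m, rfl⟩ := h5'; rw [pow_mul, hz5 hζ, one_pow]
    have hneg : (-1 : ℂ) ^ l = 1 := by
      have h := hl; rw [neg_pow, hzl, mul_one] at h; exact h
    have h2' : (2 : ℕ) ∣ l := by
      rcases Nat.even_or_odd l with he | ho
      · exact he.two_dvd
      · rw [ho.neg_one_pow] at hneg; norm_num at hneg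
    exact Nat.Coprime.mul_dvd_of_dvd_of_dvd (by norm_num) h2' h5'

include hζ hR in
lemma pgl_r5 : (mk R : PGL) ^ 5 = 1 := by
  rw [← QuotientGroup.mk_pow, GLR5 hζ hR, QuotientGroup.mk_one]

include hS in
lemma pgl_s2 : (mk S : PGL) * mk S = 1 := by
  rw [← QuotientGroup.mk_mul, GLS2 hS, QuotientGroup.mk_one]

include hζ hR hT in
lemma pgl_tr10 : ((mk T : PGL) * mk R) ^ 10 = 1 := by
  rw [← QuotientGroup.mk_mul, ← QuotientGroup.mk_pow, GLTR10 hζ hR hT, QuotientGroup.mk_one]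

lemma mk_pow_diag_one {U : GL (Fin 2) ℂ} {u : ℂ}
    (hU : (U : Matrix (Fin 2) (Fin 2) ℂ) = !![u,0;0,1]) (k : ℕ)
    (h : (mk U : PGL) ^ k = 1) : u ^ k = 1 := by
  rw [← QuotientGroup.mk_pow, show (1 : PGL) = mk 1 from (QuotientGroup.mk_one _).symm] at h
  obtain ⟨c, hc⟩ := (mk_eq_mk_iff _ _).1 h
  rw [diag_pow U u hU k, Units.val_one, Matrix.one_fin_two, smul_fin_two] at hc
  obtain ⟨e1, -, -, e4⟩ := fin_two_eq hc
  rw [mul_one] at e4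
  rw [e1, ← e4, one_mul]

lemma mk_anti_ne_one {U : GL (Fin 2) ℂ} {u v : ℂ}
    (hU : (U : Matrix (Fin 2) (Fin 2) ℂ) = !![0,u;v,0]) : (mk U : PGL) ≠ 1 := by
  intro h
  rw [show (1 : PGL) = mk 1 from (QuotientGroup.mk_one _).symm] at h
  obtain ⟨c, hc⟩ := (mk_eq_mk_iff _ _).1 h
  rw [hU, Units.val_one, Matrix.one_fin_two, smul_fin_two] at hc
  obtain ⟨e1, -, -, -⟩ := fin_two_eq hc
  rw [mul_zero] at e1
  exact one_ne_zero e1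

include hζ hR in
lemma h1five : ∀ i : ZMod 5, (mk R : PGL) ^ i.val = 1 → i = 0 := by
  intro i h
  have hu := mk_pow_diag_one hR i.val h
  have := hζ.dvd_of_pow_eq_one _ hu
  have hlt : i.val < 5 := i.val_lt
  interval_cases hv : i.val
  · exact (ZMod.val_eq_zero i).1 hv
  all_goals omega

include hζ hR hS in
lemma h2five : ∀ i : ZMod 5, (mk S : PGL) * (mk R : PGL) ^ i.val ≠ 1 := by
  intro i
  rw [← QuotientGroup.mk_pow, ← QuotientGroup.mk_mul]
  apply mk_anti_ne_one (u := 1) (v := ζ ^ i.val)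
  rw [Units.val_mul, hS, diag_pow R ζ hR, Matrix.mul_fin_two]
  norm_num

include hζ hR hT in
lemma h1ten : ∀ i : ZMod 10, ((mk T : PGL) * mk R) ^ i.val = 1 → i = 0 := by
  intro i h
  rw [← QuotientGroup.mk_mul] at h
  have hu := mk_pow_diag_one (GLTR hR hT) i.val h
  have := (negζprim hζ).dvd_of_pow_eq_one _ hu
  have hlt : i.val < 10 := i.val_lt
  have : i.val = 0 := by omega
  exact (ZMod.val_eq_zero i).1 this

include hζ hR hS hT in
lemma h2ten : ∀ i : ZMod 10, (mk S : PGL) * ((mk T : PGL) * mk R) ^ i.val ≠ 1 := by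
  intro i
  rw [← QuotientGroup.mk_mul, ← QuotientGroup.mk_pow, ← QuotientGroup.mk_mul]
  apply mk_anti_ne_one (u := 1) (v := (-ζ) ^ i.val)
  rw [Units.val_mul, hS, diag_pow (T*R) (-ζ) (GLTR hR hT), Matrix.mul_fin_two]
  norm_num

include hζ hR hT in
lemma GLTR6 : (T * R) ^ 6 = R := by
  ext : 1
  rw [diag_pow (T*R) (-ζ) (GLTR hR hT) 6, hR,
    show ((-ζ)^6 : ℂ) = ζ^5 * ζ by ring, hz5 hζ, one_mul]

include hζ hR hT in
lemma GLTR5 : (T * R) ^ 5 = T := by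
  ext : 1
  rw [diag_pow (T*R) (-ζ) (GLTR hR hT) 5, hT,
    show ((-ζ)^5 : ℂ) = -(ζ^5) by ring, hz5 hζ]

include hζ hR hT in
lemma closure_rst : Subgroup.closure {(mk R : PGL), mk S, mk T} =
    Subgroup.closure {(mk T : PGL) * mk R, mk S} := by
  apply le_antisymm <;> rw [Subgroup.closure_le]
  · intro x hx
    simp only [Set.mem_insert_iff, Set.mem_singleton_iff] at hx
    rcases hx with rfl | rfl | rfl
    · have : (mk R : PGL) = ((mk T : PGL) * mk R) ^ 6 := by
        rw [← QuotientGroup.mk_mul, ← QuotientGroup.mk_pow, GLTR6 hζ hR hT]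
      have hm : ((mk T : PGL) * mk R) ^ 6 ∈ Subgroup.closure {(mk T : PGL) * mk R, mk S} :=
        pow_mem (Subgroup.subset_closure (Set.mem_insert _ _)) _
      rwa [← this] at hm
    · exact Subgroup.subset_closure (by simp)
    · have : (mk T : PGL) = ((mk T : PGL) * mk R) ^ 5 := by
        rw [← QuotientGroup.mk_mul, ← QuotientGroup.mk_pow, GLTR5 hζ hR hT]
      have hm : ((mk T : PGL) * mk R) ^ 5 ∈ Subgroup.closure {(mk T : PGL) * mk R, mk S} :=
        pow_mem (Subgroup.subset_closure (Set.mem_insert _ _)) _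
      rwa [← this] at hm
  · intro x hx
    simp only [Set.mem_insert_iff, Set.mem_singleton_iff] at hx
    rcases hx with rfl | rfl
    · exact mul_mem (Subgroup.subset_closure (by simp)) (Subgroup.subset_closure (by simp))
    · exact Subgroup.subset_closure (by simp)

include hζ hR hS in
lemma mem_H {x : PGL} (hx : x ∈ Subgroup.closure {(mk R : PGL), mk S}) :
    ∃ k : ℕ, x = mk (R ^ k) ∨ x = mk (S * R ^ k) := by
  rw [← dihedralHom_range (mk R) (mk S) (pgl_r5 hζ hR) (pgl_s2 hS) (PGLrel5 hζ hR hS)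
    (by norm_num)] at hx
  obtain ⟨d, rfl⟩ := hx
  cases d with
  | r i => exact ⟨i.val, Or.inl (by simp [QuotientGroup.mk_pow])⟩
  | sr i => exact ⟨i.val, Or.inr (by simp [QuotientGroup.mk_pow, QuotientGroup.mk_mul])⟩

end Main2
lemma conj_eq_of_commute {G : Type*} [Group G] {a x : G} (h : Commute a x) :
    a * x * a⁻¹ = x := by
  rw [h.eq, mul_assoc, mul_inv_cancel, mul_one]

section Main3

variable {ζ : ℂ} (hζ : IsPrimitiveRoot ζ 5) {R S T : GL (Fin 2) ℂ}
  (hR : (R : Matrix (Fin 2) (Fin 2) ℂ) = !![ζ, 0; 0, 1])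
  (hS : (S : Matrix (Fin 2) (Fin 2) ℂ) = !![0, 1; 1, 0])
  (hT : (T : Matrix (Fin 2) (Fin 2) ℂ) = !![-1, 0; 0, 1])

local notation "PGL" => ProjectiveGeneralLinearGroup (Fin 2) ℂ
local notation "mk" => (QuotientGroup.mk (s := Subgroup.center (GL (Fin 2) ℂ)))

include hR hT in
lemma GLRT_comm : T * R = R * T := by
  ext : 1
  rw [Units.val_mul, Units.val_mul, hR, hT, Matrix.mul_fin_two, Matrix.mul_fin_two]
  norm_num [mul_comm]

include hS hT in
lemma pgl_ts_comm : (mk T : PGL) * mk S = mk S * mk T := by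
  rw [← QuotientGroup.mk_mul, ← QuotientGroup.mk_mul]
  refine (mk_eq_mk_iff _ _).2 ⟨-1, ?_⟩
  rw [Units.val_mul, Units.val_mul, hS, hT, Matrix.mul_fin_two, Matrix.mul_fin_two]
  norm_num [smul_fin_two]

include hζ hR hS hT in
lemma K_le_normalizer :
    Subgroup.closure {(mk R : PGL), mk S, mk T} ≤
      Subgroup.normalizer (Subgroup.closure {(mk R : PGL), mk S}) := by
  rw [Subgroup.closure_le]
  intro x hx
  simp only [Set.mem_insert_iff, Set.mem_singleton_iff] at hx
  have hrH : (mk R : PGL) ∈ Subgroup.closure {(mk R : PGL), mk S} :=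
    Subgroup.subset_closure (by simp)
  have hsH : (mk S : PGL) ∈ Subgroup.closure {(mk R : PGL), mk S} :=
    Subgroup.subset_closure (by simp)
  rcases hx with rfl | rfl | rfl
  · exact Subgroup.le_normalizer hrH
  · exact Subgroup.le_normalizer hsH
  · -- t commutes with everything in H
    have htt : (mk T : PGL) * mk T = 1 := by
      rw [← QuotientGroup.mk_mul, GLT2 hT, QuotientGroup.mk_one]
    have htr : Commute (mk T : PGL) (mk R) := by
      show _ = _
      rw [← QuotientGroup.mk_mul, ← QuotientGroup.mk_mul, GLRT_comm hR hT]
    have hts : Commute (mk T : PGL) (mk S) := pgl_ts_comm hS hT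
    have tcomm : ∀ x ∈ Subgroup.closure {(mk R : PGL), mk S}, Commute (mk T : PGL) x := by
      intro x hx
      induction hx using Subgroup.closure_induction with
      | mem y hy =>
          rcases hy with rfl | rfl
          · exact htr
          · exact hts
      | one => exact Commute.one_right _
      | mul y z _ _ hy hz => exact hy.mul_right hz
      | inv y _ hy => exact hy.inv_right
    rw [SetLike.mem_coe, Subgroup.mem_normalizer_iff]
    intro h
    constructor
    · intro hh
      rwa [conj_eq_of_commute (tcomm h hh)]
    · intro hh
      have e1 := conj_eq_of_commute (tcomm _ hh)
      have e2 : (mk T : PGL) * (mk T * h * (mk T)⁻¹) * (mk T)⁻¹ = h := by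
        have e3 : (mk T : PGL) * (mk T * h * (mk T)⁻¹) * (mk T)⁻¹ =
            (mk T * mk T) * h * (mk T * mk T)⁻¹ := by group
        rw [e3, htt]; group
      rwa [← e2.symm.trans e1] at hh

include hζ hR hS in
lemma normalizer_entry {M : GL (Fin 2) ℂ}
    (hg : (mk M : PGL) ∈ Subgroup.normalizer (Subgroup.closure {(mk R : PGL), mk S}))
    (X : GL (Fin 2) ℂ) (hX : (mk X : PGL) ∈ Subgroup.closure {(mk R : PGL), mk S}) :
    ∃ (k : ℕ) (c : ℂˣ),
      ((R ^ k : GL (Fin 2) ℂ) : Matrix (Fin 2) (Fin 2) ℂ) * M = (c : ℂ) • ((M : Matrix (Fin 2) (Fin 2) ℂ) * X) ∨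
      ((S * R ^ k : GL (Fin 2) ℂ) : Matrix (Fin 2) (Fin 2) ℂ) * M = (c : ℂ) • ((M : Matrix (Fin 2) (Fin 2) ℂ) * X) := by
  have hconj : (mk (M * X * M⁻¹) : PGL) ∈ Subgroup.closure {(mk R : PGL), mk S} := by
    have h2 := (Subgroup.mem_normalizer_iff.1 hg (mk X)).1 hX
    simp only [QuotientGroup.mk_mul, QuotientGroup.mk_inv]
    exact h2
  have e : ((M * X * M⁻¹ : GL (Fin 2) ℂ) : Matrix (Fin 2) (Fin 2) ℂ) * M =
      (M : Matrix (Fin 2) (Fin 2) ℂ) * X := by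
    rw [← Units.val_mul, inv_mul_cancel_right, Units.val_mul]
  obtain ⟨k, hk | hk⟩ := mem_H hζ hR hS hconj
  · obtain ⟨c, hc⟩ := (mk_eq_mk_iff _ _).1 hk
    exact ⟨k, c, Or.inl (by rw [hc, smul_mul_assoc, e])⟩
  · obtain ⟨c, hc⟩ := (mk_eq_mk_iff _ _).1 hk
    exact ⟨k, c, Or.inr (by rw [hc, smul_mul_assoc, e])⟩

end Main3
lemma detM_ne (M : GL (Fin 2) ℂ) : ((M : Matrix (Fin 2) (Fin 2) ℂ)).det ≠ 0 :=
  ((Matrix.isUnit_iff_isUnit_det _).1 ⟨M, rfl⟩).ne_zero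

section Main4

variable {ζ : ℂ} (hζ : IsPrimitiveRoot ζ 5) {R S T : GL (Fin 2) ℂ}
  (hR : (R : Matrix (Fin 2) (Fin 2) ℂ) = !![ζ, 0; 0, 1])
  (hS : (S : Matrix (Fin 2) (Fin 2) ℂ) = !![0, 1; 1, 0])
  (hT : (T : Matrix (Fin 2) (Fin 2) ℂ) = !![-1, 0; 0, 1])

local notation "PGL" => ProjectiveGeneralLinearGroup (Fin 2) ℂ
local notation "mk" => (QuotientGroup.mk (s := Subgroup.center (GL (Fin 2) ℂ)))

include hζ hR hS in
lemma valSRk (k : ℕ) :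
    ((S * R ^ k : GL (Fin 2) ℂ) : Matrix (Fin 2) (Fin 2) ℂ) = !![0, 1; ζ ^ k, 0] := by
  rw [Units.val_mul, hS, diag_pow R ζ hR, Matrix.mul_fin_two]
  norm_num

include hζ hR hS in
lemma diag_or_anti {M : GL (Fin 2) ℂ}
    (hg : (mk M : PGL) ∈ Subgroup.normalizer (Subgroup.closure {(mk R : PGL), mk S})) :
    ((M : Matrix (Fin 2) (Fin 2) ℂ) 0 1 = 0 ∧ (M : Matrix (Fin 2) (Fin 2) ℂ) 1 0 = 0) ∨
    ((M : Matrix (Fin 2) (Fin 2) ℂ) 0 0 = 0 ∧ (M : Matrix (Fin 2) (Fin 2) ℂ) 1 1 = 0) := by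
  obtain ⟨p, q, u, v, hM⟩ : ∃ p q u v, (M : Matrix (Fin 2) (Fin 2) ℂ) = !![p, q; u, v] :=
    ⟨_, _, _, _, Matrix.eta_fin_two _⟩
  have hdet : p * v - q * u ≠ 0 := by
    have h := detM_ne M; rwa [hM, Matrix.det_fin_two_of] at h
  suffices h : (q = 0 ∧ u = 0) ∨ (p = 0 ∧ v = 0) by
    rw [hM]; simpa using h
  have hrH : (mk R : PGL) ∈ Subgroup.closure {(mk R : PGL), mk S} :=
    Subgroup.subset_closure (by simp)
  obtain ⟨k, l, hk | hk⟩ := normalizer_entry hζ hR hS hg R hrH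
  · rw [diag_pow R ζ hR k, hR, hM, Matrix.mul_fin_two, Matrix.mul_fin_two, smul_fin_two] at hk
    obtain ⟨e1, e2, e3, e4⟩ := fin_two_eq hk
    by_cases hv : v = 0
    · -- antidiagonal case
      have hq : q ≠ 0 := fun h => hdet (by rw [h, hv]; ring)
      have hu : u ≠ 0 := fun h => hdet (by rw [h, hv]; ring)
      have hlζk : ζ ^ k = (l : ℂ) := mul_right_cancel₀ hq (by linear_combination e2)
      have hlζ : (l : ℂ) * ζ = 1 := mul_right_cancel₀ hu (by linear_combination -e3)
      have hzk : ζ ^ k ≠ 1 := by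
        intro h
        rw [hlζk] at h
        rw [h, one_mul] at hlζ
        exact hz1 hζ hlζ
      have hp0 : p * (ζ ^ k - 1) = 0 := by linear_combination e1 + p * hlζ
      rcases mul_eq_zero.1 hp0 with hp | h
      · exact Or.inr ⟨hp, hv⟩
      · exact absurd (by linear_combination h) hzk
    · -- diagonal case
      have hl1 : (l : ℂ) = 1 := mul_right_cancel₀ hv (by linear_combination -e4)
      have hu0 : u * (1 - ζ) = 0 := by linear_combination e3 + (u * ζ) * hl1
      have hu : u = 0 := by
        rcases mul_eq_zero.1 hu0 with h | h
        · exact h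
        · exact absurd (by linear_combination -h) (hz1 hζ)
      have hp : p ≠ 0 := fun h => hdet (by rw [h, hu]; ring)
      have hζk : ζ ^ k = ζ := mul_right_cancel₀ hp (by linear_combination e1 + (p * ζ) * hl1)
      have hq0 : q * (ζ - 1) = 0 := by linear_combination e2 + q * hl1 - q * hζk
      have hq : q = 0 := by
        rcases mul_eq_zero.1 hq0 with h | h
        · exact h
        · exact absurd (by linear_combination h) (hz1 hζ)
      exact Or.inl ⟨hq, hu⟩
  · exfalso
    rw [valSRk hζ hR hS k, hR, hM, Matrix.mul_fin_two, Matrix.mul_fin_two, smul_fin_two] at hk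
    obtain ⟨e1, e2, e3, e4⟩ := fin_two_eq hk
    by_cases hp : p = 0
    · have hu0 : u = 0 := by linear_combination e1 + ((l : ℂ) * ζ) * hp
      exact hdet (by rw [hp, hu0]; ring)
    by_cases hq : q = 0
    · have hv0 : v = 0 := by linear_combination e2 + (l : ℂ) * hq
      exact hdet (by rw [hq, hv0]; ring)
    have hA : ζ ^ k = (l : ℂ) * l := mul_right_cancel₀ hq (by linear_combination e4 + (l : ℂ) * e2)
    have hB : ζ ^ k = (l : ℂ) * l * (ζ * ζ) :=
      mul_right_cancel₀ hp (by linear_combination e3 + ((l : ℂ) * ζ) * e1)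
    have hzz : ζ * ζ = 1 :=
      mul_left_cancel₀ (mul_ne_zero (Units.ne_zero l) (Units.ne_zero l))
        (by linear_combination hA - hB)
    exact hzz1 hζ hzz

include hζ hR hS hT in
lemma tenth_root_mem_K {μ : ℂ} (hμ : μ ^ 10 = 1) {M : GL (Fin 2) ℂ} (c : ℂˣ)
    (hM : (M : Matrix (Fin 2) (Fin 2) ℂ) = (c : ℂ) • !![μ, 0; 0, 1]) :
    (mk M : PGL) ∈ Subgroup.closure {(mk R : PGL), mk S, mk T} := by
  obtain ⟨j, -, hj⟩ := (negζprim hζ).eq_pow_of_pow_eq_one hμ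
  have h1 : (mk ((T * R) ^ j) : PGL) = mk M :=
    (mk_eq_mk_iff _ _).2 ⟨c, by rw [hM, diag_pow (T*R) (-ζ) (GLTR hR hT) j, hj]⟩
  have h2 : (mk ((T * R) ^ j) : PGL) ∈ Subgroup.closure {(mk R : PGL), mk S, mk T} := by
    rw [QuotientGroup.mk_pow, QuotientGroup.mk_mul]
    exact pow_mem (mul_mem (Subgroup.subset_closure (by simp))
      (Subgroup.subset_closure (by simp))) _
  rwa [h1] at h2

include hζ hR hS hT in
lemma diag_mem_K {M : GL (Fin 2) ℂ}
    (hg : (mk M : PGL) ∈ Subgroup.normalizer (Subgroup.closure {(mk R : PGL), mk S}))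
    (hb : (M : Matrix (Fin 2) (Fin 2) ℂ) 0 1 = 0) (hc : (M : Matrix (Fin 2) (Fin 2) ℂ) 1 0 = 0) :
    (mk M : PGL) ∈ Subgroup.closure {(mk R : PGL), mk S, mk T} := by
  obtain ⟨p, q, u, v, hM⟩ : ∃ p q u v, (M : Matrix (Fin 2) (Fin 2) ℂ) = !![p, q; u, v] :=
    ⟨_, _, _, _, Matrix.eta_fin_two _⟩
  rw [hM] at hb hc
  have hq0 : q = 0 := by simpa using hb
  have hu0 : u = 0 := by simpa using hc
  subst hq0 hu0
  have hdet : p * v - 0 * 0 ≠ 0 := by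
    have h := detM_ne M; rwa [hM, Matrix.det_fin_two_of] at h
  have hp : p ≠ 0 := fun h => hdet (by rw [h]; ring)
  have hv : v ≠ 0 := fun h => hdet (by rw [h]; ring)
  have hsH : (mk S : PGL) ∈ Subgroup.closure {(mk R : PGL), mk S} :=
    Subgroup.subset_closure (by simp)
  obtain ⟨k, l, hk | hk⟩ := normalizer_entry hζ hR hS hg S hsH
  · exfalso
    rw [diag_pow R ζ hR k, hS, hM, Matrix.mul_fin_two, Matrix.mul_fin_two, smul_fin_two] at hk
    obtain ⟨e1, -, -, -⟩ := fin_two_eq hk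
    have h0 : ζ ^ k * p = 0 := by linear_combination e1
    rcases mul_eq_zero.1 h0 with h | h
    · exact pow_ne_zero k (hz0 hζ) h
    · exact hp h
  · rw [valSRk hζ hR hS k, hS, hM, Matrix.mul_fin_two, Matrix.mul_fin_two, smul_fin_two] at hk
    obtain ⟨-, e2, e3, -⟩ := fin_two_eq hk
    -- e2 : v = l * p , e3 : ζ^k * p = l * v  (up to ring noise)
    have hl2 : (l : ℂ) * l = ζ ^ k := mul_right_cancel₀ hp (by linear_combination -e3 - (l : ℂ) * e2)
    have hl10 : (l : ℂ) ^ 10 = 1 := by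
      rw [show ((l : ℂ) ^ 10) = ((l : ℂ) * l) ^ 5 by ring, hl2, ← pow_mul, mul_comm, pow_mul,
        hz5 hζ, one_pow]
    have hμ10 : ((l : ℂ)⁻¹) ^ 10 = 1 := by
      rw [inv_pow, hl10, inv_one]
    apply tenth_root_mem_K hζ hR hS hT hμ10 (Units.mk0 v hv)
    rw [hM, smul_fin_two]
    have hvμ : v * (l : ℂ)⁻¹ = p := by
      field_simp
      linear_combination e2
    rw [Units.val_mk0]
    rw [hvμ]
    norm_num

include hζ hR hS hT in
lemma normalizer_le_K :
    Subgroup.normalizer (Subgroup.closure {(mk R : PGL), mk S}) ≤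
      Subgroup.closure {(mk R : PGL), mk S, mk T} := by
  intro g hg
  obtain ⟨M, rfl⟩ := QuotientGroup.mk_surjective g
  rcases diag_or_anti hζ hR hS hg with ⟨hb, hc⟩ | ⟨ha, hd⟩
  · exact diag_mem_K hζ hR hS hT hg hb hc
  · have hsH : (mk S : PGL) ∈ Subgroup.closure {(mk R : PGL), mk S} :=
      Subgroup.subset_closure (by simp)
    have hgs : (mk (M * S) : PGL) ∈
        Subgroup.normalizer (Subgroup.closure {(mk R : PGL), mk S}) := by
      rw [QuotientGroup.mk_mul]
      exact mul_mem hg (Subgroup.le_normalizer hsH)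
    have hb' : ((M * S : GL (Fin 2) ℂ) : Matrix (Fin 2) (Fin 2) ℂ) 0 1 = 0 := by
      rw [Units.val_mul, hS]
      have : ((M : Matrix (Fin 2) (Fin 2) ℂ) * !![(0:ℂ),1;1,0]) 0 1 =
          (M : Matrix (Fin 2) (Fin 2) ℂ) 0 0 := by
        simp [Matrix.mul_apply, Fin.sum_univ_two]
      rw [this, ha]
    have hc' : ((M * S : GL (Fin 2) ℂ) : Matrix (Fin 2) (Fin 2) ℂ) 1 0 = 0 := by
      rw [Units.val_mul, hS]
      have : ((M : Matrix (Fin 2) (Fin 2) ℂ) * !![(0:ℂ),1;1,0]) 1 0 =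
          (M : Matrix (Fin 2) (Fin 2) ℂ) 1 1 := by
        simp [Matrix.mul_apply, Fin.sum_univ_two]
      rw [this, hd]
    have hmem := diag_mem_K hζ hR hS hT hgs hb' hc'
    have hms : (mk (M * S) : PGL) * (mk S)⁻¹ = mk M := by
      rw [QuotientGroup.mk_mul, mul_inv_cancel_right]
    rw [← hms]
    exact mul_mem hmem (inv_mem (Subgroup.subset_closure (by simp)))

end Main4

theorem stmt15 (ζ : ℂ) (hζ : IsPrimitiveRoot ζ 5)
    (R S T : GL (Fin 2) ℂ)
    (hR : (R : Matrix (Fin 2) (Fin 2) ℂ) = !![ζ, 0; 0, 1])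
    (hS : (S : Matrix (Fin 2) (Fin 2) ℂ) = !![0, 1; 1, 0])
    (hT : (T : Matrix (Fin 2) (Fin 2) ℂ) = !![-1, 0; 0, 1])
    (r s t : ProjectiveGeneralLinearGroup (Fin 2) ℂ)
    (hr : r = QuotientGroup.mk R) (hs : s = QuotientGroup.mk S)
    (ht : t = QuotientGroup.mk T) :
    Nat.card (Subgroup.closure {r, s} : Subgroup (ProjectiveGeneralLinearGroup (Fin 2) ℂ)) = 10 ∧
    Nonempty ((Subgroup.closure {r, s} : Subgroup (ProjectiveGeneralLinearGroup (Fin 2) ℂ)) ≃*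
      DihedralGroup 5) ∧
    Nat.card
      (Subgroup.closure {r, s, t} : Subgroup (ProjectiveGeneralLinearGroup (Fin 2) ℂ)) = 20 ∧
    Nonempty ((Subgroup.closure {r, s, t} : Subgroup (ProjectiveGeneralLinearGroup (Fin 2) ℂ)) ≃*
      DihedralGroup 10) ∧
    Subgroup.normalizer (Subgroup.closure {r, s}) = Subgroup.closure {r, s, t} := by
  subst hr hs ht
  obtain ⟨c5, i5⟩ := dihedral_closure_card (n := 5) (QuotientGroup.mk R) (QuotientGroup.mk S)
    (pgl_r5 hζ hR) (pgl_s2 hS) (PGLrel5 hζ hR hS) (by norm_num) (h1five hζ hR) (h2five hζ hR hS)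
  obtain ⟨c10, i10⟩ := dihedral_closure_card (n := 10)
    (QuotientGroup.mk T * QuotientGroup.mk R) (QuotientGroup.mk S)
    (pgl_tr10 hζ hR hT) (pgl_s2 hS) (PGLrel10 hζ hR hS hT) (by norm_num)
    (h1ten hζ hR hT) (h2ten hζ hR hS hT)
  refine ⟨by simpa using c5, i5, ?_, ?_, ?_⟩
  · rw [closure_rst hζ hR hT]; simpa using c10
  · rw [closure_rst hζ hR hT]; exact i10
  · exact le_antisymm (normalizer_le_K hζ hR hS hT) (K_le_normalizer hζ hR hS hT)
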